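/- Let T : Matrix (Fin d) (Fin d) ℝ be column-stochastic, let p, q : Fin d → ℝ with p_n ≥ 0 and q_n > 0 for all n, and suppose (T q)_m > 0 for all m. Then for every function f : ℝ → ℝ that is convex on [0, ∞), the f-divergence is monotone under T: ∑_m (T q)_m · f((T p)_m / (T q)_m) ≤ ∑_n q_n · f(p_n / q_n). -/

import Mathlib

open Finset

/-- A matrix is column-stochastic if all entries are nonnegative and every
column sums to `1`. -/
def ColumnStochastic {d : ℕ} (T : Matrix (Fin d) (Fin d) ℝ) : Prop :=
  (∀ m n, 0 ≤ T m n) ∧ ∀ n, ∑ m, T m n = 1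

/-- Monotonicity of the `f`-divergence under column-stochastic matrices: for `f`
convex on `[0, ∞)`, applying a stochastic matrix to both arguments can only
decrease the `f`-divergence. -/
theorem fDivergence_monotone {d : ℕ} (T : Matrix (Fin d) (Fin d) ℝ)
    (hT : ColumnStochastic T) (p q : Fin d → ℝ)
    (hp : ∀ n, 0 ≤ p n) (hq : ∀ n, 0 < q n)
    (hTq : ∀ m, 0 < T.mulVec q m)
    (f : ℝ → ℝ) (hf : ConvexOn ℝ (Set.Ici 0) f) :
    ∑ m, T.mulVec q m * f (T.mulVec p m / T.mulVec q m) ≤ ∑ n, q n * f (p n / q n) := by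
  have hmv : ∀ (v : Fin d → ℝ) m, T.mulVec v m = ∑ n, T m n * v n := by
    intro v m
    simp [Matrix.mulVec, dotProduct]
  have key : ∀ m, T.mulVec q m * f (T.mulVec p m / T.mulVec q m)
      ≤ ∑ n, T m n * q n * f (p n / q n) := by
    intro m
    have hQ := hTq m
    have hjensen := hf.map_sum_le (t := Finset.univ)
      (w := fun n => T m n * q n / T.mulVec q m) (p := fun n => p n / q n)
      (by
        intro n _
        exact div_nonneg (mul_nonneg (hT.1 m n) (hq n).le) hQ.le)
      (by
        rw [← Finset.sum_div, ← hmv q m, div_self hQ.ne'])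
      (by
        intro n _
        exact div_nonneg (hp n) (hq n).le)
    have hsum : ∑ n, (T m n * q n / T.mulVec q m) • (p n / q n)
        = T.mulVec p m / T.mulVec q m := by
      rw [hmv p m, Finset.sum_div]
      apply Finset.sum_congr rfl
      intro n _
      have h1 := (hq n).ne'
      have h2 := hQ.ne'
      simp only [smul_eq_mul]
      field_simp
    rw [hsum] at hjensen
    calc T.mulVec q m * f (T.mulVec p m / T.mulVec q m)
        ≤ T.mulVec q m * ∑ n, (T m n * q n / T.mulVec q m) • f (p n / q n) :=
          mul_le_mul_of_nonneg_left hjensen hQ.le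
      _ = ∑ n, T m n * q n * f (p n / q n) := by
          rw [Finset.mul_sum]
          apply Finset.sum_congr rfl
          intro n _
          have h2 := hQ.ne'
          simp only [smul_eq_mul]
          field_simp
  calc ∑ m, T.mulVec q m * f (T.mulVec p m / T.mulVec q m)
      ≤ ∑ m, ∑ n, T m n * q n * f (p n / q n) :=
        Finset.sum_le_sum fun m _ => key m
    _ = ∑ n, q n * f (p n / q n) := by
        rw [Finset.sum_comm]
        apply Finset.sum_congr rfl
        intro n _
        rw [← Finset.sum_mul, ← Finset.sum_mul, hT.2 n, one_mul]
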